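/- The sedenion algebra 𝕊, viewed as a left 𝕆-module via octonion multiplication on the left, satisfies the alternating associator law: p·(p·s) = (p²)·s for all p ∈ 𝕆 and s ∈ 𝕊. -/

import Mathlib

noncomputable section

/-- The octonions, realized as the Cayley–Dickson double of the quaternions. -/
abbrev 𝕆 : Type := Quaternion ℝ × Quaternion ℝ

/-- Octonion multiplication via the Cayley–Dickson formula
`(a,b)(c,d) = (ac - d̄b, da + bc̄)`. -/
def omul (x y : 𝕆) : 𝕆 :=
  (x.1 * y.1 - star y.2 * x.2, y.2 * x.1 + x.2 * star y.1)

/-- Octonionic conjugation. -/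
def oconj (x : 𝕆) : 𝕆 := (star x.1, -x.2)

/-- The octonion `1`. -/
def oone : 𝕆 := (1, 0)

/-- Real part of an octonion. -/
def ore (x : 𝕆) : ℝ := x.1.re

/-- Embedding of the reals into the octonions. -/
def oreal (r : ℝ) : 𝕆 := ((r : Quaternion ℝ), 0)

/-- Squared norm of an octonion. -/
def onormSq (x : 𝕆) : ℝ := ore (omul x (oconj x))

/-- The sedenions, realized as the Cayley–Dickson double of the octonions. -/
abbrev 𝕊 : Type := 𝕆 × 𝕆

/-- The left `𝕆`-action on `𝕊`: `p·(a + b·e₈) = p·a + (b·p)·e₈`. -/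
def smulS (p : 𝕆) (x : 𝕊) : 𝕊 := (omul p x.1, omul x.2 p)

/-- Sedenion multiplication via the Cayley–Dickson formula. -/
def smulSed (x y : 𝕊) : 𝕊 :=
  (omul x.1 y.1 - omul (oconj y.2) x.2, omul y.2 x.1 + omul x.2 (oconj y.1))

/-- Sedenion conjugation. -/
def sconj (x : 𝕊) : 𝕊 := (oconj x.1, -x.2)

/-- The sedenion imaginary unit `e₈`. -/
def e₈ : 𝕊 := (0, oone)

/-- The embedding `𝕆 ↪ 𝕊`. -/
def ι𝕆 (a : 𝕆) : 𝕊 := (a, 0)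

/-- The projection `π_𝕆 : 𝕊 → 𝕆`. -/
def π𝕆 (x : 𝕊) : 𝕆 := x.1

/-- The `𝕆`-valued inner product `⟨s,w⟩ = π_𝕆(s · conj w)` on `𝕊`. -/
def sinner (s w : 𝕊) : 𝕆 := omul s.1 (oconj w.1) + omul (oconj w.2) s.2

set_option maxHeartbeats 2000000 in
/-- The sedenions form a left octonionic module: p(ps) = (p^2)s. -/
theorem stmt_13 (p : 𝕆) (s : 𝕊) : smulS p (smulS p s) = smulS (omul p p) s := by
  obtain ⟨p1, p2⟩ := p
  obtain ⟨⟨a1, a2⟩, b1, b2⟩ := s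
  simp only [smulS, omul, Prod.mk.injEq]
  refine ⟨⟨?_, ?_⟩, ?_, ?_⟩ <;>
  · ext <;>
      simp only [Quaternion.re_mul, Quaternion.imI_mul, Quaternion.imJ_mul, Quaternion.imK_mul,
        Quaternion.re_sub, Quaternion.imI_sub, Quaternion.imJ_sub, Quaternion.imK_sub,
        Quaternion.re_add, Quaternion.imI_add, Quaternion.imJ_add, Quaternion.imK_add,
        Quaternion.re_star, Quaternion.imI_star, Quaternion.imJ_star, Quaternion.imK_star] <;>
      ring
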